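/- arXiv:1408.4339 — 2 statements merged into one kernel-verified Lean document; each statement's English description precedes it below -/
import Mathlib

section
/- Let v be an A_1 weight on ℝⁿ. There exists a constant c depending only on the dimension n (and not on [v]_{A_1}) such that for every f ∈ L^1(ℝⁿ), ‖M(f)/v‖_{L^{1,∞}(v)} ≤ c·[v]_{A_1}·‖f‖_{L^1(ℝⁿ)}, i.e. sup_{t>0} t·v({x ∈ ℝⁿ : M f(x) > t v(x)}) ≤ c [v]_{A_1} ∫_{ℝⁿ} |f| dx. -/
open MeasureTheory ENNReal Set Filter

noncomputable section

/-- Points of `ℝⁿ`. -/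
abbrev Rn (n : ℕ) := Fin n → ℝ

/-- Axis-parallel (closed) cubes in `ℝⁿ`. -/
def IsCube {n : ℕ} (Q : Set (Rn n)) : Prop :=
  ∃ (c : Rn n) (l : ℝ), 0 < l ∧ Q = Set.Icc c (fun i => c i + l)

/-- Dyadic cubes in `ℝⁿ`. -/
def IsDyadicCube {n : ℕ} (Q : Set (Rn n)) : Prop :=
  ∃ (k : ℤ) (m : Fin n → ℤ),
    Q = {x : Rn n | ∀ i, (m i : ℝ) * 2 ^ (-k) ≤ x i ∧ x i < ((m i : ℝ) + 1) * 2 ^ (-k)}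

/-- A weight: a nonnegative locally integrable (measurable) function. -/
def IsWeight {n : ℕ} (w : Rn n → ℝ) : Prop :=
  Measurable w ∧ (∀ x, 0 ≤ w x) ∧ LocallyIntegrable w volume

/-- `w(E) = ∫_E w dx`. -/
def wMeas {n : ℕ} (w : Rn n → ℝ) (E : Set (Rn n)) : ℝ≥0∞ :=
  ∫⁻ x in E, ENNReal.ofReal (w x)

/-- The average `|Q|⁻¹ ∫_Q w`. -/
def avgE {n : ℕ} (w : Rn n → ℝ) (Q : Set (Rn n)) : ℝ≥0∞ :=
  (volume Q)⁻¹ * ∫⁻ x in Q, ENNReal.ofReal (w x)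

/-- The `A_1` quantity of `w` over a cube `Q`. -/
def A1Q {n : ℕ} (w : Rn n → ℝ) (Q : Set (Rn n)) : ℝ≥0∞ :=
  avgE w Q * (essInf (fun x => ENNReal.ofReal (w x)) (volume.restrict Q))⁻¹

/-- The `A_p` quantity of `w` over a cube `Q` (`1 ≤ p < ∞`); note `1 - p/(p-1) = 1 - p'`. -/
def ApQ {n : ℕ} (p : ℝ) (w : Rn n → ℝ) (Q : Set (Rn n)) : ℝ≥0∞ :=
  if p = 1 then A1Q w Q
  else avgE w Q *
    ((volume Q)⁻¹ * ∫⁻ x in Q, ENNReal.ofReal (w x) ^ (1 - p / (p - 1))) ^ (p - 1)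

/-- The `A_p` constant `[w]_{A_p}` (supremum over all cubes). -/
def ApConst {n : ℕ} (p : ℝ) (w : Rn n → ℝ) : ℝ≥0∞ :=
  ⨆ (Q : Set (Rn n)) (_ : IsCube Q), ApQ p w Q

/-- The `A_1` constant `[w]_{A_1}`. -/
def A1Const {n : ℕ} (w : Rn n → ℝ) : ℝ≥0∞ := ApConst 1 w

/-- The Hardy-Littlewood maximal operator (over all cubes containing `x`). -/
def maxOp {n : ℕ} (f : Rn n → ℝ) (x : Rn n) : ℝ≥0∞ :=
  ⨆ (Q : Set (Rn n)) (_ : IsCube Q) (_ : x ∈ Q), avgE (fun y => |f y|) Q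

/-- The dyadic maximal operator (over dyadic cubes containing `x`). -/
def dyadicMaxOp {n : ℕ} (f : Rn n → ℝ) (x : Rn n) : ℝ≥0∞ :=
  ⨆ (Q : Set (Rn n)) (_ : IsDyadicCube Q) (_ : x ∈ Q), avgE (fun y => |f y|) Q

/-- The Fujii–Wilson `A_∞` constant `[w]_{A_∞} = sup_Q w(Q)⁻¹ ∫_Q M(χ_Q w)`. -/
def AinftyConst {n : ℕ} (w : Rn n → ℝ) : ℝ≥0∞ :=
  ⨆ (Q : Set (Rn n)) (_ : IsCube Q),
    (wMeas w Q)⁻¹ * ∫⁻ x in Q, maxOp (Q.indicator w) x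

/-- `‖f‖_{L¹(w)} = ∫ |f| w dx`. -/
def L1w {n : ℕ} (w f : Rn n → ℝ) : ℝ≥0∞ :=
  ∫⁻ x, ENNReal.ofReal |f x| * ENNReal.ofReal (w x)


namespace Stmt1Aux

lemma ball_Icc {n : ℕ} (z : Rn n) {r : ℝ} (hr : 0 ≤ r) :
    Metric.closedBall z r = Icc (fun i => z i - r) (fun i => z i + r) := by
  rw [closedBall_pi _ hr]
  ext x
  simp only [Set.mem_pi, Set.mem_univ, forall_true_left, Real.closedBall_eq_Icc,
    Set.mem_Icc, Pi.le_def]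
  exact ⟨fun h => ⟨fun i => (h i).1, fun i => (h i).2⟩, fun h i => ⟨h.1 i, h.2 i⟩⟩

lemma cube_ball {n : ℕ} (c : Rn n) {l : ℝ} (hl : 0 ≤ l) :
    Icc c (fun i => c i + l) = Metric.closedBall (fun i => c i + l / 2) (l / 2) := by
  rw [ball_Icc _ (by linarith : (0:ℝ) ≤ l / 2)]
  have h1 : (fun i : Fin n => (c i + l / 2) - l / 2) = c := funext fun i => by ring
  have h2 : (fun i : Fin n => (c i + l / 2) + l / 2) = fun i => c i + l := funext fun i => by ring
  rw [h1, h2]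

lemma vol_cube {n : ℕ} (c : Rn n) (l : ℝ) :
    volume (Icc c (fun i => c i + l)) = ENNReal.ofReal l ^ n := by
  rw [Real.volume_Icc_pi]
  simp [add_sub_cancel_left]

lemma ball_isCube {n : ℕ} (z : Rn n) {r : ℝ} (hr : 0 < r) :
    IsCube (Metric.closedBall z r) := by
  refine ⟨fun i => z i - r, 2 * r, by linarith, ?_⟩
  rw [ball_Icc z hr.le]
  have h2 : (fun i : Fin n => (z i - r) + 2 * r) = fun i => z i + r := funext fun i => by ring
  rw [h2]

lemma vol_ball {n : ℕ} (z : Rn n) {r : ℝ} (hr : 0 ≤ r) :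
    volume (Metric.closedBall z r) = ENNReal.ofReal (2 * r) ^ n := by
  rw [ball_Icc z hr]
  have h : (fun i : Fin n => z i + r) = fun i => (z i - r) + 2 * r := funext fun i => by ring
  rw [h]
  exact vol_cube _ _

lemma essInf_ne_top {n : ℕ} (v : Rn n → ℝ) {Q : Set (Rn n)} (hQ : volume Q ≠ 0) :
    essInf (fun x => ENNReal.ofReal (v x)) (volume.restrict Q) ≠ ∞ := by
  intro h
  have h2 := ae_essInf_le (f := fun x : Rn n => ENNReal.ofReal (v x)) (μ := volume.restrict Q)
  rw [h] at h2
  have hne : volume.restrict Q ≠ 0 := fun h0 => hQ (Measure.restrict_eq_zero.1 h0)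
  haveI : (ae (volume.restrict Q)).NeBot := MeasureTheory.ae_neBot.2 hne
  obtain ⟨y, hy⟩ := h2.exists
  simp only [top_le_iff] at hy
  exact ENNReal.ofReal_ne_top hy

lemma null_lt_essInf {n : ℕ} {v : Rn n → ℝ} (hvm : Measurable v) {Q : Set (Rn n)}
    (hQm : MeasurableSet Q) :
    volume {y | y ∈ Q ∧ ENNReal.ofReal (v y) <
      essInf (fun x => ENNReal.ofReal (v x)) (volume.restrict Q)} = 0 := by
  have _ := hQm
  have h := meas_lt_essInf (μ := volume.restrict Q) (f := fun x : Rn n => ENNReal.ofReal (v x))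
  rw [Measure.restrict_apply
    (measurableSet_lt hvm.ennreal_ofReal measurable_const)] at h
  have heq : {y | y ∈ Q ∧ ENNReal.ofReal (v y) <
      essInf (fun x => ENNReal.ofReal (v x)) (volume.restrict Q)}
      = {y | ENNReal.ofReal (v y) <
        essInf (fun x => ENNReal.ofReal (v x)) (volume.restrict Q)} ∩ Q := by
    ext y; exact ⟨fun hy => ⟨hy.2, hy.1⟩, fun hy => ⟨hy.2, hy.1⟩⟩
  rw [heq]
  exact h

lemma a1q_le_const {n : ℕ} {v : Rn n → ℝ} {Q : Set (Rn n)} (hQ : IsCube Q) :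
    A1Q v Q ≤ A1Const v := by
  have h2 : ApQ (1:ℝ) v Q ≤ ApConst 1 v :=
    le_iSup₂ (f := fun (Q : Set (Rn n)) (_ : IsCube Q) => ApQ (1:ℝ) v Q) Q hQ
  simpa [ApQ, A1Const] using h2

lemma avg_le {n : ℕ} {v : Rn n → ℝ} (hA : A1Const v ≠ ∞) {Q : Set (Rn n)} (hQ : IsCube Q) :
    avgE v Q ≤ A1Const v * essInf (fun x => ENNReal.ofReal (v x)) (volume.restrict Q) := by
  have h1 : avgE v Q * (essInf (fun x => ENNReal.ofReal (v x)) (volume.restrict Q))⁻¹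
      ≤ A1Const v := a1q_le_const hQ
  set e := essInf (fun x => ENNReal.ofReal (v x)) (volume.restrict Q) with he
  have hvol : volume Q ≠ 0 := by
    obtain ⟨c, l, hl, rfl⟩ := hQ
    rw [vol_cube]
    exact pow_ne_zero _ (by simp [ENNReal.ofReal_eq_zero]; linarith)
  have hetop : e ≠ ∞ := essInf_ne_top v hvol
  rcases eq_or_ne e 0 with h0 | h0
  · rw [h0, ENNReal.inv_zero] at h1
    rcases eq_or_ne (avgE v Q) 0 with ha0 | ha0
    · simp [ha0]
    · rw [ENNReal.mul_top ha0] at h1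
      exact absurd (top_le_iff.1 (le_of_eq (eq_top_iff.2 h1).symm)) hA
  · have h2 := mul_le_mul_left h1 e
    rwa [mul_assoc, ENNReal.inv_mul_cancel h0 hetop, mul_one] at h2

lemma exists_rat_cube {n : ℕ} (g : Rn n → ℝ≥0∞) {x : Rn n} {c : Rn n} {l : ℝ} (hl : 0 < l)
    {a : ℝ≥0∞} (hx : x ∈ Icc c (fun i => c i + l))
    (ha : a < (volume (Icc c (fun i => c i + l)))⁻¹ * ∫⁻ y in Icc c (fun i => c i + l), g y) :
    ∃ (q : Fin n → ℚ) (s : ℚ), 0 < (s:ℝ) ∧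
      x ∈ Icc (fun i => (q i : ℝ)) (fun i => (q i : ℝ) + (s:ℝ)) ∧
      a < (volume (Icc (fun i => (q i : ℝ)) (fun i => (q i : ℝ) + (s:ℝ))))⁻¹ *
        ∫⁻ y in Icc (fun i => (q i : ℝ)) (fun i => (q i : ℝ) + (s:ℝ)), g y := by
  set J := ∫⁻ y in Icc c (fun i => c i + l), g y with hJ
  rw [vol_cube] at ha
  have hls : Tendsto (fun k : ℕ => l + 3 / ((k:ℝ) + 1)) atTop (nhds l) := by
    have h0 := tendsto_one_div_add_atTop_nhds_zero_nat (𝕜 := ℝ)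
    have h3 := (h0.const_mul (3:ℝ)).const_add l
    simpa [mul_one_div, div_eq_mul_inv] using h3
  have hbig : Tendsto (fun k : ℕ => (ENNReal.ofReal (l + 3 / ((k:ℝ) + 1)) ^ n)⁻¹ * J) atTop
      (nhds ((ENNReal.ofReal l ^ n)⁻¹ * J)) := by
    have h1 : Tendsto (fun k : ℕ => ENNReal.ofReal (l + 3 / ((k:ℝ) + 1))) atTop
        (nhds (ENNReal.ofReal l)) := (ENNReal.continuous_ofReal.tendsto l).comp hls
    have h2 := ENNReal.Tendsto.pow (n := n) h1
    have h3 := ENNReal.tendsto_inv_iff.2 h2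
    exact ENNReal.Tendsto.mul_const h3
      (Or.inl (ENNReal.inv_ne_zero.2 (pow_ne_top ENNReal.ofReal_ne_top)))
  have hev := hbig.eventually (eventually_gt_nhds ha)
  obtain ⟨k, hk⟩ := hev.exists
  have hk1 : (0:ℝ) < 1 / ((k:ℝ) + 1) := by positivity
  choose q hq1 hq2 using fun i : Fin n =>
    exists_rat_btwn (show c i - 1 / ((k:ℝ) + 1) < c i by linarith)
  obtain ⟨s, hs1, hs2⟩ := exists_rat_btwn
    (show l + 1 / ((k:ℝ) + 1) < l + 2 / ((k:ℝ) + 1) by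
      have h2 : (1:ℝ) / ((k:ℝ) + 1) < 2 / ((k:ℝ) + 1) := by
        gcongr
        · norm_num
      linarith)
  have hs0 : (0:ℝ) < (s:ℝ) := by linarith
  refine ⟨q, s, hs0, ?_, ?_⟩
  · obtain ⟨hx1, hx2⟩ := hx
    refine ⟨fun i => ?_, fun i => ?_⟩
    · exact le_trans (hq2 i).le (hx1 i)
    · have h1 := hx2 i
      have h2 := hq1 i
      simp only at h1 ⊢
      linarith
  · have hsub : Icc c (fun i => c i + l) ⊆
        Icc (fun i => (q i : ℝ)) (fun i => (q i : ℝ) + (s:ℝ)) := by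
      intro y hy
      refine ⟨fun i => le_trans (hq2 i).le (hy.1 i), fun i => ?_⟩
      have h1 := hy.2 i
      have h2 := hq1 i
      simp only at h1 ⊢
      linarith
    have hJle : J ≤ ∫⁻ y in Icc (fun i => (q i : ℝ)) (fun i => (q i : ℝ) + (s:ℝ)), g y :=
      lintegral_mono_set hsub
    have hvol' : volume (Icc (fun i => (q i : ℝ)) (fun i => (q i : ℝ) + (s:ℝ)))
        ≤ ENNReal.ofReal (l + 3 / ((k:ℝ) + 1)) ^ n := by
      rw [vol_cube]
      have h2 : (2:ℝ) / ((k:ℝ) + 1) < 3 / ((k:ℝ) + 1) := by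
        gcongr
        · norm_num
      exact pow_le_pow_left' (ENNReal.ofReal_le_ofReal (by linarith)) n
    calc a < (ENNReal.ofReal (l + 3 / ((k:ℝ) + 1)) ^ n)⁻¹ * J := hk
      _ ≤ (volume (Icc (fun i => (q i : ℝ)) (fun i => (q i : ℝ) + (s:ℝ))))⁻¹ *
          ∫⁻ y in Icc (fun i => (q i : ℝ)) (fun i => (q i : ℝ) + (s:ℝ)), g y :=
        mul_le_mul' (ENNReal.inv_le_inv' hvol') hJle

end Stmt1Aux

/-- If `v ∈ A_1` on `ℝⁿ`, then there is a dimensional constant `c`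
(independent of `[v]_{A_1}`) with `‖M(f)/v‖_{L^{1,∞}(v)} ≤ c [v]_{A_1} ‖f‖_{L¹(ℝⁿ)}`. -/
theorem stmt1 (n : ℕ) :
    ∃ c : ℝ≥0∞, c ≠ ∞ ∧
      ∀ v : Rn n → ℝ, IsWeight v → A1Const v ≠ ∞ →
        ∀ f : Rn n → ℝ, Integrable f volume →
          ∀ t : ℝ, 0 < t →
            ENNReal.ofReal t * wMeas v {x | ENNReal.ofReal (t * v x) < maxOp f x} ≤
              c * A1Const v * ∫⁻ x, ENNReal.ofReal |f x| := by
  classical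
  refine ⟨4 ^ n, ENNReal.pow_ne_top (by norm_num), ?_⟩
  intro v hv hA f hf t ht
  have hvm : Measurable v := hv.1
  have ht0 : (ENNReal.ofReal t) ≠ 0 := (ENNReal.ofReal_pos.2 ht).ne'
  have httop : (ENNReal.ofReal t) ≠ ∞ := ENNReal.ofReal_ne_top
  set I := ∫⁻ x, ENNReal.ofReal |f x| with hIdef
  have hIfin : I ≠ ∞ := by
    have h1 : (∫⁻ a, (‖f a‖₊ : ℝ≥0∞) ∂(volume : Measure (Rn n))) < ∞ := hf.hasFiniteIntegral
    rw [hIdef]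
    simp_rw [← Real.enorm_eq_ofReal_abs]
    exact h1.ne
  set S := {x : Rn n | ENNReal.ofReal (t * v x) < maxOp f x} with hSdef
  rcases Nat.eq_zero_or_pos n with hn | hn
  · -- dimension 0 : the space is a single point
    subst hn
    have huniv : ∀ (c : Rn 0) (l : ℝ), Icc c (fun i => c i + l) = univ := by
      intro c l
      ext x
      simp [Set.mem_Icc, Pi.le_def]
    have hvol_univ : volume (univ : Set (Rn 0)) = 1 := by
      rw [← huniv 0 1, Real.volume_Icc_pi]
      simp
    have hQuniv : ∀ Q : Set (Rn 0), IsCube Q → Q = univ := by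
      rintro Q ⟨c, l, hl, rfl⟩
      exact huniv c l
    have hlintu : ∀ h : Rn 0 → ℝ≥0∞, (∫⁻ y, h y) = h default := by
      intro h
      rw [MeasureTheory.lintegral_unique, hvol_univ, mul_one]
      exact congrArg h (Subsingleton.elim _ _)

    have hmax : ∀ x : Rn 0, maxOp f x ≤ I := by
      intro x
      refine iSup_le fun Q => iSup_le fun hQ => iSup_le fun hx => ?_
      rw [hQuniv Q hQ]
      show (volume (univ : Set (Rn 0)))⁻¹ * ∫⁻ y in univ, ENNReal.ofReal |f y| ≤ I
      rw [hvol_univ, Measure.restrict_univ, inv_one, one_mul]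
    by_cases hv0 : v default ≤ 0
    · have h1 : wMeas v S = 0 := by
        have h2 : wMeas v S ≤ ∫⁻ y, ENNReal.ofReal (v y) := setLIntegral_le_lintegral _ _
        rw [hlintu (fun y => ENNReal.ofReal (v y)), ENNReal.ofReal_eq_zero.2 hv0] at h2
        exact nonpos_iff_eq_zero.1 h2
      rw [h1, mul_zero]
      exact zero_le
    · push_neg at hv0
      have hcube : IsCube (univ : Set (Rn 0)) := ⟨0, 1, one_pos, (huniv 0 1).symm⟩
      have hWd0 : ENNReal.ofReal (v default) ≠ 0 := (ENNReal.ofReal_pos.2 hv0).ne'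
      have havg : avgE v univ = ENNReal.ofReal (v default) := by
        rw [avgE, hvol_univ, Measure.restrict_univ, inv_one, one_mul]
        exact hlintu _
      have hessu : essInf (fun x : Rn 0 => ENNReal.ofReal (v x)) (volume.restrict univ)
          = ENNReal.ofReal (v default) := by
        rw [Measure.restrict_univ]
        have hconst : (fun x : Rn 0 => ENNReal.ofReal (v x))
            = fun _ => ENNReal.ofReal (v default) :=
          funext fun y => by rw [Subsingleton.elim y default]
        rw [hconst]
        exact essInf_const _ (fun h0 => by rw [h0] at hvol_univ; simp at hvol_univ)
      have hA1 : 1 ≤ A1Const v := by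
        have h1 : A1Q v univ = 1 := by
          rw [A1Q, havg, hessu, ENNReal.mul_inv_cancel hWd0 ENNReal.ofReal_ne_top]
        calc (1:ℝ≥0∞) = A1Q v univ := h1.symm
          _ ≤ A1Const v := Stmt1Aux.a1q_le_const hcube
      by_cases hxS : default ∈ S
      · have hlt : ENNReal.ofReal (t * v default) < I := lt_of_lt_of_le hxS (hmax default)
        calc ENNReal.ofReal t * wMeas v S
            ≤ ENNReal.ofReal t * ∫⁻ y, ENNReal.ofReal (v y) :=
              mul_le_mul_right (setLIntegral_le_lintegral _ _) _
          _ = ENNReal.ofReal t * ENNReal.ofReal (v default) := by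
              rw [hlintu (fun y => ENNReal.ofReal (v y))]
          _ = ENNReal.ofReal (t * v default) := (ENNReal.ofReal_mul ht.le).symm
          _ ≤ I := hlt.le
          _ ≤ 4 ^ 0 * A1Const v * I := by
              rw [pow_zero, one_mul]
              exact le_mul_of_one_le_left' hA1
      · have hSe : S = ∅ := by
          ext y
          simp only [hSdef, mem_setOf_eq, mem_empty_iff_false, iff_false]
          intro hy
          exact hxS (by rwa [Subsingleton.elim (default : Rn 0) y])
        rw [hSe]
        rw [show wMeas v (∅ : Set (Rn 0)) = 0 from by
          rw [wMeas, Measure.restrict_empty, lintegral_zero_measure], mul_zero]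
        exact zero_le
  · -- main case `0 < n`
    set g : Rn n → ℝ≥0∞ := fun y => ENNReal.ofReal |f y| with hg
    set ρ : Measure (Rn n) := volume.withDensity (fun x => ENNReal.ofReal (v x)) with hρ
    set ν : Measure (Rn n) := volume.withDensity g with hν
    set Qp : (Fin n → ℚ) × ℚ → Set (Rn n) :=
      fun p => Icc (fun i => ((p.1 i : ℝ))) (fun i => ((p.1 i : ℝ)) + ((p.2 : ℝ))) with hQpdef
    set ctr : (Fin n → ℚ) × ℚ → Rn n :=
      fun p => fun i => ((p.1 i : ℝ)) + ((p.2 : ℝ)) / 2 with hctrdef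
    set rad : (Fin n → ℚ) × ℚ → ℝ := fun p => ((p.2 : ℝ)) / 2 with hraddef
    have hQpm : ∀ p, MeasurableSet (Qp p) := fun p => measurableSet_Icc
    have hQpball : ∀ p, 0 ≤ ((p.2 : ℝ)) → Qp p = Metric.closedBall (ctr p) (rad p) :=
      fun p hp => Stmt1Aux.cube_ball _ hp
    set B := ⋃ p : (Fin n → ℚ) × ℚ, {y | y ∈ Qp p ∧ ENNReal.ofReal (v y) <
      essInf (fun x => ENNReal.ofReal (v x)) (volume.restrict (Qp p))} with hBdef
    have hBnull : volume B = 0 :=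
      measure_iUnion_null fun p => Stmt1Aux.null_lt_essInf hvm (hQpm p)
    set κ := (4:ℝ≥0∞) ^ n * A1Const v * (ENNReal.ofReal t)⁻¹ with hκ
    have hkey : ∀ ε : ℝ, 0 < ε → ρ ((S ∩ {x | ε ≤ v x}) \ B) ≤ κ * I := by
      intro ε hε
      set a₀ := ENNReal.ofReal (t * ε) with ha₀def
      have ha₀0 : a₀ ≠ 0 := (ENNReal.ofReal_pos.2 (mul_pos ht hε)).ne'
      set R : ℝ := max 1 ((I / a₀).toReal) with hRdef
      set T : Set ((Fin n → ℚ) × ℚ) := {p | 0 < rad p ∧ rad p ≤ R ∧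
        wMeas v (Metric.closedBall (ctr p) (4 * rad p)) ≤ κ * ∫⁻ y in Qp p, g y} with hTdef
      obtain ⟨u, huT, hdisj, hcov⟩ :=
        Vitali.exists_disjoint_subfamily_covering_enlargement_closedBall T ctr rad R
          (fun p hp => hp.2.1) 4 (by norm_num)
      have hwit : ∀ x ∈ (S ∩ {x | ε ≤ v x}) \ B, ∃ p ∈ T, x ∈ Qp p := by
        rintro x ⟨⟨hxS, hxε⟩, hxB⟩
        have hxε' : ε ≤ v x := hxε
        have hxS' : ENNReal.ofReal (t * v x) < maxOp f x := hxS
        rw [maxOp, lt_iSup_iff] at hxS'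
        obtain ⟨Q, hxS'⟩ := hxS'
        rw [lt_iSup_iff] at hxS'
        obtain ⟨hQ, hxS'⟩ := hxS'
        rw [lt_iSup_iff] at hxS'
        obtain ⟨hxQ, hlt⟩ := hxS'
        obtain ⟨c, l, hl, rfl⟩ := hQ
        have hlt' : ENNReal.ofReal (t * v x) <
            (volume (Icc c (fun i => c i + l)))⁻¹ * ∫⁻ y in Icc c (fun i => c i + l), g y := hlt
        obtain ⟨q, s, hs0, hxQ', havg⟩ := Stmt1Aux.exists_rat_cube g hl hxQ hlt'
        set p : (Fin n → ℚ) × ℚ := (q, s) with hpdef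
        have hQp_eq : Qp p = Icc (fun i => (q i : ℝ)) (fun i => (q i : ℝ) + (s:ℝ)) := rfl
        have hxQp : x ∈ Qp p := hxQ'
        have havgp : ENNReal.ofReal (t * v x) <
            (volume (Qp p))⁻¹ * ∫⁻ y in Qp p, g y := by rw [hQp_eq]; exact havg
        have hvolp0 : volume (Qp p) ≠ 0 := by
          rw [hQp_eq, Stmt1Aux.vol_cube]
          refine pow_ne_zero _ ?_
          simp only [ne_eq, ENNReal.ofReal_eq_zero, not_le]
          exact hs0
        have hvolptop : volume (Qp p) ≠ ∞ := by
          rw [hQp_eq, Stmt1Aux.vol_cube]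
          exact pow_ne_top ENNReal.ofReal_ne_top
        have ha0le : a₀ ≤ ENNReal.ofReal (t * v x) :=
          ENNReal.ofReal_le_ofReal (mul_le_mul_of_nonneg_left hxε' ht.le)
        have havg' : a₀ < (volume (Qp p))⁻¹ * ∫⁻ y in Qp p, g y := lt_of_le_of_lt ha0le havgp
        have hJp : volume (Qp p) * a₀ < ∫⁻ y in Qp p, g y := by
          have h2 := ENNReal.mul_lt_mul_right hvolp0 hvolptop havg'
          rwa [← mul_assoc, ENNReal.mul_inv_cancel hvolp0 hvolptop, one_mul] at h2
        have hfinp : ∫⁻ y in Qp p, g y ≤ I := setLIntegral_le_lintegral _ _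
        have hsR : (s:ℝ) ≤ R := by
          have hvlt : volume (Qp p) < I / a₀ :=
            (ENNReal.lt_div_iff_mul_lt (Or.inl ha₀0) (Or.inl ENNReal.ofReal_ne_top)).2
              (lt_of_lt_of_le hJp hfinp)
          rw [hQp_eq, Stmt1Aux.vol_cube, ← ENNReal.ofReal_pow hs0.le] at hvlt
          have hdivtop : I / a₀ ≠ ∞ := (ENNReal.div_lt_top hIfin ha₀0).ne
          have hsn : (s:ℝ) ^ n < (I / a₀).toReal :=
            (ENNReal.ofReal_lt_iff_lt_toReal (by positivity) hdivtop).1 hvlt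
          rcases le_or_gt ((s:ℝ)) 1 with h1 | h1
          · exact le_trans h1 (le_max_left _ _)
          · have h2 : (s:ℝ) ≤ (s:ℝ) ^ n := le_self_pow₀ h1.le hn.ne'
            exact le_trans h2 (le_trans hsn.le (le_max_right _ _))
        have hradp : rad p = (s:ℝ) / 2 := rfl
        have hscube : 0 < rad p := by rw [hradp]; linarith
        have hrad4 : 0 < 4 * rad p := by linarith
        have hDcube : IsCube (Metric.closedBall (ctr p) (4 * rad p)) :=
          Stmt1Aux.ball_isCube _ hrad4
        have hvolD : volume (Metric.closedBall (ctr p) (4 * rad p))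
            = (4:ℝ≥0∞) ^ n * volume (Qp p) := by
          rw [Stmt1Aux.vol_ball _ hrad4.le, hQp_eq, Stmt1Aux.vol_cube]
          have h24 : 2 * (4 * rad p) = 4 * (s:ℝ) := by rw [hradp]; ring
          rw [h24, ENNReal.ofReal_mul (by norm_num : (0:ℝ) ≤ 4), mul_pow]
          norm_num
        have hvD0 : volume (Metric.closedBall (ctr p) (4 * rad p)) ≠ 0 := by
          rw [hvolD]
          exact mul_ne_zero (pow_ne_zero _ (by norm_num)) hvolp0
        have hvDtop : volume (Metric.closedBall (ctr p) (4 * rad p)) ≠ ∞ := by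
          rw [hvolD]
          exact ENNReal.mul_ne_top (pow_ne_top (by norm_num)) hvolptop
        have hQsubD : Qp p ⊆ Metric.closedBall (ctr p) (4 * rad p) := by
          rw [hQpball p hs0.le]
          exact Metric.closedBall_subset_closedBall (by linarith)
        have hessD := Stmt1Aux.avg_le hA hDcube
        have hessDQ : essInf (fun x => ENNReal.ofReal (v x))
              (volume.restrict (Metric.closedBall (ctr p) (4 * rad p)))
            ≤ essInf (fun x => ENNReal.ofReal (v x)) (volume.restrict (Qp p)) :=
          essInf_antitone_measure
            (Measure.absolutelyContinuous_of_le (Measure.restrict_mono hQsubD le_rfl))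
        have hessQx : essInf (fun x => ENNReal.ofReal (v x)) (volume.restrict (Qp p))
            ≤ ENNReal.ofReal (v x) := by
          by_contra hcon
          push_neg at hcon
          exact hxB (mem_iUnion.2 ⟨p, hxQp, hcon⟩)
        have hWx : ENNReal.ofReal (v x) ≤
            (ENNReal.ofReal t)⁻¹ * ((volume (Qp p))⁻¹ * ∫⁻ y in Qp p, g y) := by
          have h1 : ENNReal.ofReal t * ENNReal.ofReal (v x) ≤
              (volume (Qp p))⁻¹ * ∫⁻ y in Qp p, g y := by
            rw [← ENNReal.ofReal_mul ht.le]
            exact havgp.le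
          have h2 := mul_le_mul_right h1 (ENNReal.ofReal t)⁻¹
          rwa [← mul_assoc, ENNReal.inv_mul_cancel ht0 httop, one_mul] at h2
        have hgood : wMeas v (Metric.closedBall (ctr p) (4 * rad p))
            ≤ κ * ∫⁻ y in Qp p, g y := by
          have e1 : wMeas v (Metric.closedBall (ctr p) (4 * rad p))
              = volume (Metric.closedBall (ctr p) (4 * rad p))
                * avgE v (Metric.closedBall (ctr p) (4 * rad p)) := by
            rw [wMeas, avgE, ← mul_assoc, ENNReal.mul_inv_cancel hvD0 hvDtop, one_mul]
          calc wMeas v (Metric.closedBall (ctr p) (4 * rad p))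
              = volume (Metric.closedBall (ctr p) (4 * rad p))
                * avgE v (Metric.closedBall (ctr p) (4 * rad p)) := e1
            _ ≤ volume (Metric.closedBall (ctr p) (4 * rad p))
                * (A1Const v * essInf (fun x => ENNReal.ofReal (v x))
                    (volume.restrict (Metric.closedBall (ctr p) (4 * rad p)))) :=
              mul_le_mul_right hessD _
            _ ≤ volume (Metric.closedBall (ctr p) (4 * rad p))
                * (A1Const v * ENNReal.ofReal (v x)) :=
              mul_le_mul_right (mul_le_mul_right (le_trans hessDQ hessQx) _) _
            _ ≤ volume (Metric.closedBall (ctr p) (4 * rad p))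
                * (A1Const v * ((ENNReal.ofReal t)⁻¹
                    * ((volume (Qp p))⁻¹ * ∫⁻ y in Qp p, g y))) :=
              mul_le_mul_right (mul_le_mul_right hWx _) _
            _ = κ * ∫⁻ y in Qp p, g y := by
              rw [hvolD, hκ]
              rw [show (4:ℝ≥0∞) ^ n * volume (Qp p) *
                  (A1Const v * ((ENNReal.ofReal t)⁻¹
                    * ((volume (Qp p))⁻¹ * ∫⁻ y in Qp p, g y)))
                  = (volume (Qp p) * (volume (Qp p))⁻¹) *
                    ((4:ℝ≥0∞) ^ n * A1Const v * (ENNReal.ofReal t)⁻¹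
                      * ∫⁻ y in Qp p, g y) from by ring]
              rw [ENNReal.mul_inv_cancel hvolp0 hvolptop, one_mul]
        refine ⟨p, ⟨hscube, ?_, hgood⟩, hxQp⟩
        rw [hradp]
        have hR1 : (1:ℝ) ≤ R := le_max_left _ _
        rcases le_or_gt ((s:ℝ)) R with h | h
        · linarith
        · linarith [hsR]
      have hsubU : (S ∩ {x | ε ≤ v x}) \ B
          ⊆ ⋃ b ∈ u, Metric.closedBall (ctr b) (4 * rad b) := by
        intro x hx
        obtain ⟨p, hpT, hxp⟩ := hwit x hx
        obtain ⟨b, hbu, hsubb⟩ := hcov p hpT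
        have hx' : x ∈ Metric.closedBall (ctr p) (rad p) := by
          rw [← hQpball p (by have := hpT.1; rw [hraddef] at this; simp only at this; linarith)]
          exact hxp
        exact mem_biUnion hbu (hsubb hx')
      have hu_count : u.Countable := u.to_countable
      have hQpu : ∀ b ∈ u, Qp b = Metric.closedBall (ctr b) (rad b) := by
        intro b hb
        refine hQpball b ?_
        have := (huT hb).1
        rw [hraddef] at this
        simp only at this
        linarith
      have hdisj' : u.PairwiseDisjoint Qp := by
        intro i hi j hj hij
        have hd := hdisj hi hj hij
        have : Function.onFun Disjoint Qp i j := by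
          rw [Function.onFun, hQpu i hi, hQpu j hj]
          exact hd
        exact this
      calc ρ ((S ∩ {x | ε ≤ v x}) \ B)
          ≤ ρ (⋃ b ∈ u, Metric.closedBall (ctr b) (4 * rad b)) := measure_mono hsubU
        _ ≤ ∑' b : u, ρ (Metric.closedBall (ctr ↑b) (4 * rad ↑b)) :=
            measure_biUnion_le ρ hu_count _
        _ ≤ ∑' b : u, κ * ν (Qp ↑b) := by
            refine ENNReal.tsum_le_tsum fun b => ?_
            have hbT := huT b.2
            have h1 : ρ (Metric.closedBall (ctr ↑b) (4 * rad ↑b)) =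
                wMeas v (Metric.closedBall (ctr ↑b) (4 * rad ↑b)) := by
              rw [hρ, withDensity_apply _ measurableSet_closedBall]
              rfl
            rw [h1]
            refine le_trans hbT.2.2 ?_
            rw [hν, withDensity_apply _ (hQpm ↑b)]
        _ = κ * ∑' b : u, ν (Qp ↑b) := ENNReal.tsum_mul_left
        _ = κ * ν (⋃ b ∈ u, Qp b) := by
            rw [measure_biUnion hu_count hdisj' (fun b _ => hQpm b)]
        _ ≤ κ * ν univ := mul_le_mul_right (measure_mono (subset_univ _)) _
        _ = κ * I := by
            rw [hν, withDensity_apply _ MeasurableSet.univ, Measure.restrict_univ]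
    set Z := {x : Rn n | v x ≤ 0} with hZdef
    have hZm : MeasurableSet Z := measurableSet_le hvm measurable_const
    have hρZ : ρ Z = 0 := by
      rw [hρ, withDensity_apply _ hZm]
      have h0 : ∀ᵐ y ∂(volume.restrict Z), ENNReal.ofReal (v y) = 0 :=
        ae_restrict_of_forall_mem hZm fun y hy => ENNReal.ofReal_eq_zero.2 hy
      rw [lintegral_congr_ae h0, lintegral_zero]
    have hρB : ρ B = 0 := by
      rw [hρ]
      exact (withDensity_absolutelyContinuous volume _) hBnull
    set Sk : ℕ → Set (Rn n) := fun k => (S ∩ {x | 1 / ((k:ℝ) + 1) ≤ v x}) \ B with hSkdef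
    have hmono : Monotone Sk := by
      intro k k' hkk
      refine diff_subset_diff_left (inter_subset_inter_right _ ?_)
      intro x hx
      have hx' : 1 / ((k:ℝ) + 1) ≤ v x := hx
      have h2 : 1 / ((k':ℝ) + 1) ≤ 1 / ((k:ℝ) + 1) := by
        apply one_div_le_one_div_of_le
        · positivity
        · have : (k:ℝ) ≤ (k':ℝ) := Nat.cast_le.2 hkk
          linarith
      exact le_trans h2 hx'
    have hSsub : S ⊆ (Z ∪ B) ∪ ⋃ k, Sk k := by
      intro x hxS
      by_cases hZx : v x ≤ 0
      · exact Or.inl (Or.inl hZx)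
      by_cases hBx : x ∈ B
      · exact Or.inl (Or.inr hBx)
      push_neg at hZx
      obtain ⟨k, hk⟩ := exists_nat_one_div_lt hZx
      exact Or.inr (mem_iUnion.2 ⟨k, ⟨⟨hxS, hk.le⟩, hBx⟩⟩)
    have hUle : ρ (⋃ k, Sk k) ≤ κ * I := by
      rw [hmono.measure_iUnion]
      exact iSup_le fun k => hkey _ (by positivity)
    have hρS : ρ S ≤ κ * I :=
      calc ρ S ≤ ρ ((Z ∪ B) ∪ ⋃ k, Sk k) := measure_mono hSsub
        _ ≤ ρ (Z ∪ B) + ρ (⋃ k, Sk k) := measure_union_le _ _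
        _ ≤ (ρ Z + ρ B) + ρ (⋃ k, Sk k) := add_le_add_left (measure_union_le _ _) _
        _ ≤ κ * I := by
            rw [hρZ, hρB]
            simpa using hUle
    have hwρ : wMeas v S ≤ ρ S := by
      rw [wMeas, hρ]
      exact withDensity_apply_le _ _
    calc ENNReal.ofReal t * wMeas v S ≤ ENNReal.ofReal t * ρ S := mul_le_mul_right hwρ _
      _ ≤ ENNReal.ofReal t * (κ * I) := mul_le_mul_right hρS _
      _ = (ENNReal.ofReal t * (ENNReal.ofReal t)⁻¹) * ((4:ℝ≥0∞) ^ n * A1Const v * I) := by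
          rw [hκ]; ring
      _ = (4:ℝ≥0∞) ^ n * A1Const v * I := by
          rw [ENNReal.mul_inv_cancel ht0 httop, one_mul]
end
end

section
/- If u ∈ A_1 on ℝⁿ and v ∈ A_∞(u), then the product uv ∈ A_∞. In particular, if v ∈ A_p(u) for some 1 ≤ p < ∞, then uv ∈ A_p. -/
open MeasureTheory ENNReal Set Filter

noncomputable section

/-- The weighted maximal operator `M_u f(x) = sup_{Q ∋ x} u(Q)⁻¹ ∫_Q |f| u`. -/
def wMaxOp {n : ℕ} (u f : Rn n → ℝ) (x : Rn n) : ℝ≥0∞ :=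
  ⨆ (Q : Set (Rn n)) (_ : IsCube Q) (_ : x ∈ Q),
    (wMeas u Q)⁻¹ * ∫⁻ y in Q, ENNReal.ofReal |f y| * ENNReal.ofReal (u y)

/-- `v ∈ A_p(u)`, the Muckenhoupt class with respect to the measure `u dx`; for `p = 1` this
means `M_u v ≤ C v` a.e. -/
def MemApU {n : ℕ} (p : ℝ) (u v : Rn n → ℝ) : Prop :=
  if p = 1 then
    ∃ C : ℝ≥0∞, C ≠ ∞ ∧ ∀ᵐ x : Rn n, wMaxOp u v x ≤ C * ENNReal.ofReal (v x)
  else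
    ∃ C : ℝ≥0∞, C ≠ ∞ ∧ ∀ Q : Set (Rn n), IsCube Q →
      ((wMeas u Q)⁻¹ * ∫⁻ x in Q, ENNReal.ofReal (v x) * ENNReal.ofReal (u x)) *
        ((wMeas u Q)⁻¹ *
            ∫⁻ x in Q, ENNReal.ofReal (v x) ^ (1 - p / (p - 1)) * ENNReal.ofReal (u x))
          ^ (p - 1) ≤ C

/-- `v ∈ A_∞(u) = ⋃_{p ≥ 1} A_p(u)`. -/
def MemAinftyU {n : ℕ} (u v : Rn n → ℝ) : Prop :=
  ∃ p : ℝ, 1 ≤ p ∧ MemApU p u v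


/-- Basic facts about cubes: positive finite volume, compactness, measurability. -/
lemma cube_props {n : ℕ} {Q : Set (Rn n)} (hQ : IsCube Q) :
    volume Q ≠ 0 ∧ volume Q ≠ ∞ ∧ IsCompact Q ∧ MeasurableSet Q := by
  obtain ⟨c, l, hl, rfl⟩ := hQ
  have hvol : volume (Icc c fun i => c i + l) = ENNReal.ofReal l ^ n := by
    rw [Real.volume_Icc_pi]; simp
  refine ⟨?_, ?_, isCompact_Icc, measurableSet_Icc⟩
  · rw [hvol]; exact pow_ne_zero _ (by simp [ENNReal.ofReal_eq_zero, not_le, hl])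
  · rw [hvol]; exact ENNReal.pow_ne_top ENNReal.ofReal_ne_top

lemma rpow_le_rpow_nonpos {x y : ℝ≥0∞} {s : ℝ} (h : x ≤ y) (hs : s ≤ 0) : y ^ s ≤ x ^ s := by
  rw [← neg_neg s, ENNReal.rpow_neg x, ENNReal.rpow_neg y, ENNReal.inv_le_inv]
  exact ENNReal.rpow_le_rpow h (by linarith)

/-- The key quantitative lemma: `u ∈ A₁`, `v ∈ A_p(u)` implies `uv ∈ A_p`. -/
lemma degenerate {n : ℕ} (u v : Rn n → ℝ) (hu : IsWeight u) (hv : IsWeight v)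
    {Q : Set (Rn n)} (huQ0 : wMeas u Q = 0) (p : ℝ) :
    ApQ p (fun x => u x * v x) Q = 0 := by
  have h0 : (fun x => ENNReal.ofReal (u x)) =ᵐ[volume.restrict Q] 0 :=
    (lintegral_eq_zero_iff hu.1.ennreal_ofReal).mp huQ0
  have havg : avgE (fun x => u x * v x) Q = 0 := by
    have h1 : ∫⁻ x in Q, ENNReal.ofReal (u x * v x) = 0 := by
      rw [lintegral_eq_zero_iff (f := fun x => ENNReal.ofReal (u x * v x)) (hu.1.mul hv.1).ennreal_ofReal]
      filter_upwards [h0] with x hx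
      simp only [Pi.zero_apply] at hx ⊢
      rw [ENNReal.ofReal_mul (hu.2.1 x), hx, zero_mul]
    rw [avgE, h1, mul_zero]
  rw [ApQ]
  split_ifs
  · rw [A1Q, havg, zero_mul]
  · rw [havg, zero_mul]

lemma avg_decomp (A I : ℝ≥0∞) {b : ℝ≥0∞} (hb0 : b ≠ 0) (hbt : b ≠ ∞) :
    A * I = (A * b) * (b⁻¹ * I) := by
  rw [mul_assoc, ← mul_assoc b, ENNReal.mul_inv_cancel hb0 hbt, one_mul]

lemma cube_basic {n : ℕ} (u : Rn n → ℝ) (hu : IsWeight u) (hu1 : A1Const u ≠ ∞)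
    {Q : Set (Rn n)} (hQ : IsCube Q) (huQ0 : wMeas u Q ≠ 0) :
    wMeas u Q ≠ ∞ ∧ avgE u Q ≠ 0 ∧ avgE u Q ≠ ∞ ∧
    avgE u Q * (essInf (fun x => ENNReal.ofReal (u x)) (volume.restrict Q))⁻¹ ≤ A1Const u ∧
    essInf (fun x => ENNReal.ofReal (u x)) (volume.restrict Q) ≠ 0 ∧
    essInf (fun x => ENNReal.ofReal (u x)) (volume.restrict Q) ≠ ∞ := by
  obtain ⟨hvol0, hvolt, hcomp, hmeas⟩ := cube_props hQ
  have huQt : wMeas u Q ≠ ∞ := (hu.2.2.integrableOn_isCompact hcomp).lintegral_lt_top.ne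
  have hA1Q : ApQ 1 u Q ≤ A1Const u :=
    le_iSup₂ (f := fun (R : Set (Rn n)) (_ : IsCube R) => ApQ 1 u R) Q hQ
  rw [ApQ, if_pos rfl, A1Q] at hA1Q
  have hA0 : avgE u Q ≠ 0 := mul_ne_zero (ENNReal.inv_ne_zero.mpr hvolt) huQ0
  have hAt : avgE u Q ≠ ∞ := ENNReal.mul_ne_top (ENNReal.inv_ne_top.mpr hvol0) huQt
  have hε0 : essInf (fun x => ENNReal.ofReal (u x)) (volume.restrict Q) ≠ 0 := by
    intro h
    rw [h, ENNReal.inv_zero, ENNReal.mul_top hA0] at hA1Q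
    exact hu1 (top_le_iff.mp hA1Q)
  have hεt : essInf (fun x => ENNReal.ofReal (u x)) (volume.restrict Q) ≠ ∞ := by
    haveI : (ae (volume.restrict Q)).NeBot :=
      ae_neBot.2 (by simp [Measure.restrict_eq_zero, hvol0])
    obtain ⟨x, hx⟩ :=
      (ae_essInf_le (f := fun x => ENNReal.ofReal (u x)) (μ := volume.restrict Q)).exists
    exact ne_top_of_le_ne_top ENNReal.ofReal_ne_top hx
  exact ⟨huQt, hA0, hAt, hA1Q, hε0, hεt⟩

/-- The key quantitative lemma: `u ∈ A₁`, `v ∈ A_p(u)` implies `uv ∈ A_p`. -/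
lemma key_lemma {n : ℕ} (u v : Rn n → ℝ) (hu : IsWeight u) (hv : IsWeight v)
    (hu1 : A1Const u ≠ ∞) (p : ℝ) (hp : 1 ≤ p) (hvp : MemApU p u v) :
    ApConst p (fun x => u x * v x) ≠ ∞ := by
  have hW : ∀ x, ENNReal.ofReal (u x * v x) = ENNReal.ofReal (u x) * ENNReal.ofReal (v x) :=
    fun x => ENNReal.ofReal_mul (hu.2.1 x)
  by_cases hp1 : p = 1
  · subst hp1
    rw [MemApU, if_pos rfl] at hvp
    obtain ⟨C, hCt, hCae⟩ := hvp
    refine ne_top_of_le_ne_top (ENNReal.mul_ne_top hu1 hCt) (iSup₂_le fun Q hQ => ?_)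
    by_cases huQ0 : wMeas u Q = 0
    · rw [degenerate u v hu hv huQ0 1]; exact zero_le
    obtain ⟨hvol0, hvolt, hcomp, hmeasQ⟩ := cube_props hQ
    obtain ⟨huQt, hA0, hAt, hA1Q, hε0, hεt⟩ := cube_basic u hu hu1 hQ huQ0
    haveI : (ae (volume.restrict Q)).NeBot :=
      ae_neBot.2 (by simp [Measure.restrict_eq_zero, hvol0])
    set ε := essInf (fun x => ENNReal.ofReal (u x)) (volume.restrict Q) with hεdef
    set e := essInf (fun x => ENNReal.ofReal (v x)) (volume.restrict Q) with hedef
    set I := ∫⁻ x in Q, ENNReal.ofReal (v x) * ENNReal.ofReal (u x) with hI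
    set a := (wMeas u Q)⁻¹ * I with ha
    have hlow : ∀ x ∈ Q, a ≤ wMaxOp u v x := by
      intro x hx
      have heq : a = (wMeas u Q)⁻¹ * ∫⁻ y in Q, ENNReal.ofReal |v y| * ENNReal.ofReal (u y) := by
        rw [ha, hI]
        congr 1
        exact lintegral_congr fun y => by rw [abs_of_nonneg (hv.2.1 y)]
      rw [heq, wMaxOp]
      exact le_iSup₂_of_le Q hQ (le_iSup_of_le hx le_rfl)
    have haeQ : ∀ᵐ x ∂(volume.restrict Q), a ≤ C * ENNReal.ofReal (v x) := by
      filter_upwards [ae_restrict_of_ae hCae, ae_restrict_mem hmeasQ] with x h1 h2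
      exact (hlow x h2).trans h1
    have haCe : a ≤ C * e := by
      by_cases hC0 : C = 0
      · obtain ⟨x, hx⟩ := haeQ.exists
        rw [hC0, zero_mul] at hx
        exact hx.trans zero_le
      · have h1 : C⁻¹ * a ≤ e := by
          refine le_essInf_of_ae_le _ ?_
          filter_upwards [haeQ] with x hx
          calc C⁻¹ * a ≤ C⁻¹ * (C * ENNReal.ofReal (v x)) := mul_le_mul_right hx _
            _ = ENNReal.ofReal (v x) := by
                rw [← mul_assoc, ENNReal.inv_mul_cancel hC0 hCt, one_mul]
        calc a = C * (C⁻¹ * a) := by rw [← mul_assoc, ENNReal.mul_inv_cancel hC0 hCt, one_mul]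
          _ ≤ C * e := mul_le_mul_right h1 _
    have havg : avgE (fun x => u x * v x) Q = avgE u Q * a := by
      have h1 : avgE (fun x => u x * v x) Q = (volume Q)⁻¹ * I := by
        rw [avgE, hI]
        congr 1
        exact lintegral_congr fun x => by rw [hW x, mul_comm]
      rw [h1, ha]
      exact avg_decomp _ _ huQ0 huQt
    have hei : ε * e ≤ essInf (fun x => ENNReal.ofReal (u x * v x)) (volume.restrict Q) := by
      refine le_essInf_of_ae_le _ ?_
      filter_upwards [ae_essInf_le (f := fun x => ENNReal.ofReal (u x)) (μ := volume.restrict Q),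
        ae_essInf_le (f := fun x => ENNReal.ofReal (v x)) (μ := volume.restrict Q)] with x h1 h2
      calc ε * e ≤ ENNReal.ofReal (u x) * ENNReal.ofReal (v x) := mul_le_mul' h1 h2
        _ = ENNReal.ofReal (u x * v x) := (hW x).symm
    rw [ApQ, if_pos rfl, A1Q, havg]
    calc avgE u Q * a * (essInf (fun x => ENNReal.ofReal (u x * v x)) (volume.restrict Q))⁻¹
        ≤ (avgE u Q * (C * e)) * (ε⁻¹ * e⁻¹) := by
          refine mul_le_mul' (mul_le_mul_right haCe _) ?_
          rw [← ENNReal.mul_inv (Or.inl hε0) (Or.inl hεt)]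
          exact ENNReal.inv_le_inv.mpr hei
      _ = (avgE u Q * ε⁻¹) * C * (e * e⁻¹) := by ring
      _ ≤ A1Const u * C * 1 :=
          mul_le_mul' (mul_le_mul_left hA1Q _) (ENNReal.mul_inv_le_one e)
      _ = A1Const u * C := mul_one _
  · have hp' : 1 < p := lt_of_le_of_ne hp (Ne.symm hp1)
    have hpne : p - 1 ≠ 0 := by intro h; apply hp1; linarith
    rw [MemApU, if_neg hp1] at hvp
    obtain ⟨C, hCt, hCb⟩ := hvp
    refine ne_top_of_le_ne_top
      (ENNReal.mul_ne_top (ENNReal.rpow_ne_top_of_nonneg (by linarith) hu1) hCt)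
      (iSup₂_le fun Q hQ => ?_)
    by_cases huQ0 : wMeas u Q = 0
    · rw [degenerate u v hu hv huQ0 p]; exact zero_le
    obtain ⟨hvol0, hvolt, hcomp, hmeasQ⟩ := cube_props hQ
    obtain ⟨huQt, hA0, hAt, hA1Q, hε0, hεt⟩ := cube_basic u hu hu1 hQ huQ0
    rw [ApQ, if_neg hp1]
    have hXY := hCb Q hQ
    set ε := essInf (fun x => ENNReal.ofReal (u x)) (volume.restrict Q) with hεdef
    set r := 1 - p / (p - 1) with hr
    have hr1 : r - 1 ≤ 0 := by
      rw [hr]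
      have h2 : 0 < p / (p - 1) := div_pos (by linarith) (by linarith)
      linarith
    have hrp : (r - 1) * (p - 1) = -p := by
      rw [hr]
      field_simp
      ring
    have hmeasI : Measurable fun x => ENNReal.ofReal (v x) ^ r * ENNReal.ofReal (u x) :=
      ((ENNReal.continuous_rpow_const.measurable).comp hv.1.ennreal_ofReal).mul
        hu.1.ennreal_ofReal
    have hptw : ∀ᵐ x ∂(volume.restrict Q), ENNReal.ofReal (u x * v x) ^ r ≤
        ε ^ (r - 1) * (ENNReal.ofReal (v x) ^ r * ENNReal.ofReal (u x)) := by
      filter_upwards [ae_essInf_le (f := fun x => ENNReal.ofReal (u x))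
        (μ := volume.restrict Q)] with x hx
      have hux0 : ENNReal.ofReal (u x) ≠ 0 := by
        intro h0
        exact hε0 (le_antisymm (le_of_le_of_eq hx h0) zero_le)
      rw [hW x, ENNReal.mul_rpow_of_ne_top ENNReal.ofReal_ne_top ENNReal.ofReal_ne_top]
      have hsplit : ENNReal.ofReal (u x) ^ r
          = ENNReal.ofReal (u x) ^ (r - 1) * ENNReal.ofReal (u x) := by
        conv_lhs => rw [show r = (r - 1) + 1 by ring]
        rw [ENNReal.rpow_add _ _ hux0 ENNReal.ofReal_ne_top, ENNReal.rpow_one]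
      calc ENNReal.ofReal (u x) ^ r * ENNReal.ofReal (v x) ^ r
          = ENNReal.ofReal (u x) ^ (r - 1) *
              (ENNReal.ofReal (v x) ^ r * ENNReal.ofReal (u x)) := by rw [hsplit]; ring
        _ ≤ ε ^ (r - 1) * (ENNReal.ofReal (v x) ^ r * ENNReal.ofReal (u x)) :=
            mul_le_mul_left (rpow_le_rpow_nonpos hx hr1) _
    set J := ∫⁻ x in Q, ENNReal.ofReal (v x) ^ r * ENNReal.ofReal (u x) with hJ
    set I := ∫⁻ x in Q, ENNReal.ofReal (v x) * ENNReal.ofReal (u x) with hI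
    set X := (wMeas u Q)⁻¹ * I with hX
    set Y := (wMeas u Q)⁻¹ * J with hY
    have hint : ∫⁻ x in Q, ENNReal.ofReal (u x * v x) ^ r ≤ ε ^ (r - 1) * J := by
      refine le_trans (lintegral_mono_ae hptw) ?_
      rw [hJ, lintegral_const_mul _ hmeasI]
    have havg : avgE (fun x => u x * v x) Q = avgE u Q * X := by
      have h1 : avgE (fun x => u x * v x) Q = (volume Q)⁻¹ * I := by
        rw [avgE, hI]
        congr 1
        exact lintegral_congr fun x => by rw [hW x, mul_comm]
      rw [h1, hX]
      exact avg_decomp _ _ huQ0 huQt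
    have hB : (volume Q)⁻¹ * ∫⁻ x in Q, ENNReal.ofReal (u x * v x) ^ r
        ≤ ε ^ (r - 1) * (avgE u Q * Y) := by
      calc (volume Q)⁻¹ * ∫⁻ x in Q, ENNReal.ofReal (u x * v x) ^ r
          ≤ (volume Q)⁻¹ * (ε ^ (r - 1) * J) := mul_le_mul_right hint _
        _ = ε ^ (r - 1) * ((volume Q)⁻¹ * J) := by ring
        _ = ε ^ (r - 1) * (avgE u Q * Y) := by
            rw [hY, avg_decomp (volume Q)⁻¹ J huQ0 huQt]; rfl
    have hBp : ((volume Q)⁻¹ * ∫⁻ x in Q, ENNReal.ofReal (u x * v x) ^ r) ^ (p - 1)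
        ≤ ε ^ (-p) * (avgE u Q ^ (p - 1) * Y ^ (p - 1)) := by
      refine le_trans (ENNReal.rpow_le_rpow hB (by linarith)) (le_of_eq ?_)
      rw [ENNReal.mul_rpow_of_nonneg _ _ (by linarith : (0:ℝ) ≤ p - 1),
        ENNReal.mul_rpow_of_nonneg _ _ (by linarith : (0:ℝ) ≤ p - 1),
        ← ENNReal.rpow_mul, hrp]
    have hpow : avgE u Q * avgE u Q ^ (p - 1) * ε ^ (-p) = (avgE u Q * ε⁻¹) ^ p := by
      have h1 : avgE u Q * avgE u Q ^ (p - 1) = avgE u Q ^ p := by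
        calc avgE u Q * avgE u Q ^ (p - 1)
            = avgE u Q ^ (1:ℝ) * avgE u Q ^ (p - 1) := by rw [ENNReal.rpow_one]
          _ = avgE u Q ^ ((1:ℝ) + (p - 1)) := (ENNReal.rpow_add _ _ hA0 hAt).symm
          _ = avgE u Q ^ p := by norm_num
      rw [h1, ENNReal.mul_rpow_of_nonneg _ _ (by linarith : (0:ℝ) ≤ p),
        ENNReal.inv_rpow, ← ENNReal.rpow_neg]
    rw [havg]
    calc avgE u Q * X * ((volume Q)⁻¹ * ∫⁻ x in Q, ENNReal.ofReal (u x * v x) ^ r) ^ (p - 1)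
        ≤ avgE u Q * X * (ε ^ (-p) * (avgE u Q ^ (p - 1) * Y ^ (p - 1))) :=
          mul_le_mul_right hBp _
      _ = (avgE u Q * avgE u Q ^ (p - 1) * ε ^ (-p)) * (X * Y ^ (p - 1)) := by ring
      _ = (avgE u Q * ε⁻¹) ^ p * (X * Y ^ (p - 1)) := by rw [hpow]
      _ ≤ A1Const u ^ p * C :=
          mul_le_mul' (ENNReal.rpow_le_rpow hA1Q (by linarith)) hXY

/-- If `u ∈ A_1` on `ℝⁿ` and `v ∈ A_∞(u)`, then `uv ∈ A_∞`; in particular, if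
`v ∈ A_p(u)` for some `1 ≤ p < ∞`, then `uv ∈ A_p`. -/
theorem stmt16 (n : ℕ) (u v : Rn n → ℝ) (hu : IsWeight u) (hv : IsWeight v)
    (hu1 : A1Const u ≠ ∞) :
    (MemAinftyU u v → ∃ q : ℝ, 1 ≤ q ∧ ApConst q (fun x => u x * v x) ≠ ∞) ∧
    (∀ p : ℝ, 1 ≤ p → MemApU p u v → ApConst p (fun x => u x * v x) ≠ ∞) := by
  refine ⟨fun h => ?_, fun p hp hvp => key_lemma u v hu hv hu1 p hp hvp⟩
  obtain ⟨p, hp, hvp⟩ := h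
  exact ⟨p, hp, key_lemma u v hu hv hu1 p hp hvp⟩
end
end
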